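/- (Strictly increasing differences of the surrogate MSE envelope) Fix n ≥ 1, M ≥ 1 with M ≤ n, and constants B₀ > 0, β > 0. For a spectrum vector ζ = (ζ_1,...,ζ_M) with nonnegative entries, define the continuous MSE envelope 𝓜(α; ζ) = B₀ n^{−2β} α^{−2β} + Σ_{c=1}^{M} ζ_c · H_c(α) for α ∈ (0, 1], where H_c(α) = (α^c/c!) ∏_{j=0}^{c−1}(αn − j). Suppose ζ⁽²⁾ dominates ζ⁽¹⁾ in the high-order sense: there exists a critical order c* such that ζ⁽²⁾_c = ζ⁽¹⁾_c for all c < c*, ζ⁽²⁾_c ≥ ζ⁽¹⁾_c for all c ≥ c*, with strict inequality for at least one c ≥ c*. Then for all α in ((M−1)/n, 1], the partial derivatives satisfy ∂𝓜/∂α(α; ζ⁽²⁾) > ∂𝓜/∂α(α; ζ⁽¹⁾); equivalently, for all (M−1)/n < α < α' ≤ 1, 𝓜(α'; ζ⁽²⁾) − 𝓜(α; ζ⁽²⁾) > 𝓜(α'; ζ⁽¹⁾) − 𝓜(α; ζ⁽¹⁾). -/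

import Mathlib

/-- The continuous extension `H_c(α) = (α^c/c!) ∏_{j=0}^{c−1} (αn − j)` of the `c`-th
order variance inflation multiplier of subagging. -/
noncomputable def Hmul (n c : ℕ) (α : ℝ) : ℝ :=
  α ^ c / (Nat.factorial c : ℝ) * ∏ j ∈ Finset.range c, (α * n - j)

/-- The continuous finite-sample MSE envelope
`𝓜(α; ζ) = B₀ n^{−2β} α^{−2β} + Σ_{c=1}^{M} ζ_c H_c(α)`. -/
noncomputable def Menv (n M : ℕ) (B₀ β : ℝ) (ζ : ℕ → ℝ) (α : ℝ) : ℝ :=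
  B₀ * (n : ℝ) ^ (-(2 * β)) * α ^ (-(2 * β)) + ∑ c ∈ Finset.Icc 1 M, ζ c * Hmul n c α

noncomputable def Hd (n c : ℕ) (α : ℝ) : ℝ :=
  (c : ℝ) * α ^ (c - 1) / (Nat.factorial c : ℝ) * ∏ j ∈ Finset.range c, (α * n - j)
  + α ^ c / (Nat.factorial c : ℝ)
      * ∑ i ∈ Finset.range c, (∏ j ∈ (Finset.range c).erase i, (α * n - j)) * n

lemma hasDerivAt_Hmul (n c : ℕ) (α : ℝ) : HasDerivAt (Hmul n c) (Hd n c α) α := by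
  have hP : HasDerivAt (fun x : ℝ => ∏ j ∈ Finset.range c, (x * n - j))
      (∑ i ∈ Finset.range c, (∏ j ∈ (Finset.range c).erase i, (α * n - j)) * n) α := by
    have := HasDerivAt.fun_finsetProd (u := Finset.range c)
      (f := fun j x => x * (n:ℝ) - j) (f' := fun _ => (n:ℝ)) (x := α)
      (fun i _ => by simpa using ((hasDerivAt_id α).mul_const (n:ℝ)).sub_const (i:ℝ))
    simpa [smul_eq_mul] using this
  have hpow : HasDerivAt (fun x : ℝ => x ^ c / (Nat.factorial c : ℝ))
      ((c : ℝ) * α ^ (c - 1) / (Nat.factorial c : ℝ)) α :=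
    (hasDerivAt_pow c α).div_const _
  show HasDerivAt (fun x : ℝ => x ^ c / (Nat.factorial c : ℝ) * ∏ j ∈ Finset.range c, (x * n - j)) (Hd n c α) α
  simpa [Hmul, Hd, mul_comm, mul_assoc, mul_left_comm] using hpow.fun_mul hP

lemma Hd_pos {n c : ℕ} {α : ℝ} (hα : 0 < α) (hc : 1 ≤ c) (h : (c : ℝ) - 1 < α * n) :
    0 < Hd n c α := by
  have hfac : (0:ℝ) < (Nat.factorial c : ℝ) := by exact_mod_cast c.factorial_pos
  have hfactor : ∀ j ∈ Finset.range c, (0:ℝ) < α * n - j := by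
    intro j hj
    have : (j : ℝ) ≤ (c : ℝ) - 1 := by
      have hj' : j + 1 ≤ c := Finset.mem_range.mp hj
      have := (Nat.cast_le (α := ℝ)).mpr hj'
      push_cast at this; linarith
    linarith
  have hP : (0:ℝ) < ∏ j ∈ Finset.range c, (α * n - j) := Finset.prod_pos hfactor
  have h1 : 0 < (c : ℝ) * α ^ (c - 1) / (Nat.factorial c : ℝ) * ∏ j ∈ Finset.range c, (α * n - j) := by
    apply mul_pos _ hP
    apply div_pos _ hfac
    exact mul_pos (by exact_mod_cast hc) (pow_pos hα _)
  have h2 : 0 ≤ α ^ c / (Nat.factorial c : ℝ)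
      * ∑ i ∈ Finset.range c, (∏ j ∈ (Finset.range c).erase i, (α * n - j)) * n := by
    apply mul_nonneg (le_of_lt (div_pos (pow_pos hα _) hfac))
    apply Finset.sum_nonneg
    intro i hi
    apply mul_nonneg _ (Nat.cast_nonneg n)
    exact le_of_lt (Finset.prod_pos fun j hj => hfactor j (Finset.mem_of_mem_erase hj))
  unfold Hd; linarith

lemma hasDerivAt_Menv (n M : ℕ) (B₀ β : ℝ) (ζ : ℕ → ℝ) {α : ℝ} (hα : 0 < α) :
    HasDerivAt (Menv n M B₀ β ζ)
      (B₀ * (n : ℝ) ^ (-(2 * β)) * (-(2 * β) * α ^ (-(2 * β) - 1))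
        + ∑ c ∈ Finset.Icc 1 M, ζ c * Hd n c α) α := by
  have h1 : HasDerivAt (fun x : ℝ => B₀ * (n : ℝ) ^ (-(2 * β)) * x ^ (-(2 * β)))
      (B₀ * (n : ℝ) ^ (-(2 * β)) * (-(2 * β) * α ^ (-(2 * β) - 1))) α :=
    (Real.hasDerivAt_rpow_const (Or.inl hα.ne')).const_mul _
  have h2 : HasDerivAt (fun x : ℝ => ∑ c ∈ Finset.Icc 1 M, ζ c * Hmul n c x)
      (∑ c ∈ Finset.Icc 1 M, ζ c * Hd n c α) α :=
    HasDerivAt.fun_sum fun c _ => (hasDerivAt_Hmul n c α).const_mul (ζ c)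
  exact h1.add h2

/-- **Strictly increasing differences of the surrogate MSE envelope.**
If the spectrum `ζ⁽²⁾` dominates `ζ⁽¹⁾` in the high-order sense (equal below a critical
order `c*`, `≥` at or above `c*`, strictly greater for at least one `c ≥ c*`), then for
every `α ∈ ((M−1)/n, 1]` the partial derivatives satisfy
`∂𝓜/∂α(α; ζ⁽²⁾) > ∂𝓜/∂α(α; ζ⁽¹⁾)`; equivalently, for all `(M−1)/n < α < α' ≤ 1`,
`𝓜(α'; ζ⁽²⁾) − 𝓜(α; ζ⁽²⁾) > 𝓜(α'; ζ⁽¹⁾) − 𝓜(α; ζ⁽¹⁾)`. -/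
theorem Menv_strictly_increasing_differences (n M : ℕ)
    (hn : 1 ≤ n) (hM : 1 ≤ M) (hMn : M ≤ n)
    (B₀ β : ℝ) (hB₀ : 0 < B₀) (hβ : 0 < β)
    (ζ₁ ζ₂ : ℕ → ℝ) (hζ₁ : ∀ c, 0 ≤ ζ₁ c) (hζ₂ : ∀ c, 0 ≤ ζ₂ c)
    (cstar : ℕ)
    (hlow : ∀ c, 1 ≤ c → c ≤ M → c < cstar → ζ₂ c = ζ₁ c)
    (hhigh : ∀ c, 1 ≤ c → c ≤ M → cstar ≤ c → ζ₁ c ≤ ζ₂ c)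
    (hstrict : ∃ c, 1 ≤ c ∧ c ≤ M ∧ cstar ≤ c ∧ ζ₁ c < ζ₂ c) :
    (∀ α : ℝ, ((M : ℝ) - 1) / n < α → α ≤ 1 →
      deriv (Menv n M B₀ β ζ₁) α < deriv (Menv n M B₀ β ζ₂) α)
    ∧ (∀ α α' : ℝ, ((M : ℝ) - 1) / n < α → α < α' → α' ≤ 1 →
      Menv n M B₀ β ζ₁ α' - Menv n M B₀ β ζ₁ α
        < Menv n M B₀ β ζ₂ α' - Menv n M B₀ β ζ₂ α) := by
  have hnpos : (0:ℝ) < n := by exact_mod_cast hn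
  have hM1 : (0:ℝ) ≤ ((M : ℝ) - 1) / n := by
    apply div_nonneg _ hnpos.le
    have : (1:ℝ) ≤ M := by exact_mod_cast hM
    linarith
  have key : ∀ α : ℝ, ((M : ℝ) - 1) / n < α →
      deriv (Menv n M B₀ β ζ₁) α < deriv (Menv n M B₀ β ζ₂) α := by
    intro α hα1
    have hα : 0 < α := lt_of_le_of_lt hM1 hα1
    rw [(hasDerivAt_Menv n M B₀ β ζ₁ hα).deriv, (hasDerivAt_Menv n M B₀ β ζ₂ hα).deriv]
    apply add_lt_add_right
    have hdom : ∀ c ∈ Finset.Icc 1 M, (c:ℝ) - 1 < α * n := by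
      intro c hc
      obtain ⟨hc1, hcM⟩ := Finset.mem_Icc.mp hc
      have h1 : ((M:ℝ) - 1) < α * n := (div_lt_iff₀ hnpos).mp hα1
      have h2 : (c:ℝ) ≤ (M:ℝ) := by exact_mod_cast hcM
      linarith
    apply Finset.sum_lt_sum
    · intro c hc
      obtain ⟨hc1, hcM⟩ := Finset.mem_Icc.mp hc
      have hle : ζ₁ c ≤ ζ₂ c := by
        rcases lt_or_ge c cstar with h | h
        · exact (hlow c hc1 hcM h).ge
        · exact hhigh c hc1 hcM h
      exact mul_le_mul_of_nonneg_right hle (Hd_pos hα hc1 (hdom c hc)).le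
    · obtain ⟨c, hc1, hcM, _, hlt⟩ := hstrict
      refine ⟨c, Finset.mem_Icc.mpr ⟨hc1, hcM⟩, ?_⟩
      exact mul_lt_mul_of_pos_right hlt (Hd_pos hα hc1 (hdom c (Finset.mem_Icc.mpr ⟨hc1, hcM⟩)))
  refine ⟨fun α h1 _ => key α h1, ?_⟩
  intro α α' hα1 hαα' hα'1
  set F : ℝ → ℝ := fun x => Menv n M B₀ β ζ₂ x - Menv n M B₀ β ζ₁ x with hF
  have hmono : StrictMonoOn F (Set.Ioc (((M : ℝ) - 1) / n) 1) := by
    apply strictMonoOn_of_deriv_pos (convex_Ioc _ _)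
    · intro x hx
      have hx0 : 0 < x := lt_of_le_of_lt hM1 hx.1
      exact (((hasDerivAt_Menv n M B₀ β ζ₂ hx0).sub
        (hasDerivAt_Menv n M B₀ β ζ₁ hx0)).differentiableAt.continuousAt).continuousWithinAt
    · intro x hx
      rw [interior_Ioc] at hx
      have hx0 : 0 < x := lt_of_le_of_lt hM1 hx.1
      have hd := ((hasDerivAt_Menv n M B₀ β ζ₂ hx0).fun_sub
        (hasDerivAt_Menv n M B₀ β ζ₁ hx0)).deriv
      rw [hF]
      rw [hd]
      have := key x hx.1
      rw [(hasDerivAt_Menv n M B₀ β ζ₁ hx0).deriv, (hasDerivAt_Menv n M B₀ β ζ₂ hx0).deriv] at this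
      linarith
  have := hmono (Set.mem_Ioc.mpr ⟨hα1, le_of_lt (lt_of_lt_of_le hαα' hα'1)⟩)
    (Set.mem_Ioc.mpr ⟨lt_trans hα1 hαα', hα'1⟩) hαα'
  simp only [hF] at this
  linarith
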